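/- Let n ≥ 2 and let h be an n×n real symmetric matrix satisfying h i j = 0 whenever i ≠ j and both i, j lie among the first n−1 indices, and h i i > 0 for every i among the first n−1 indices. Assume det h = 0 and h n n = 0. Then h i n = 0 for every i < n (so h is diagonal), and the kernel of h is exactly the span of the last standard basis vector eₙ. -/

import Mathlib

/-- The case `h n n = 0`: a singular "arrowhead" symmetric matrix with vanishing
last diagonal entry is diagonal, and its kernel is spanned by the last standard
basis vector. -/
theorem stmt_3 (n : ℕ) (hn : 2 ≤ n) (h : Matrix (Fin n) (Fin n) ℝ)
    (hsymm : ∀ i j : Fin n, h i j = h j i)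
    (hdiag : ∀ i j : Fin n, i ≠ j → (i : ℕ) < n - 1 → (j : ℕ) < n - 1 → h i j = 0)
    (hpos : ∀ i : Fin n, (i : ℕ) < n - 1 → 0 < h i i)
    (hdet : h.det = 0)
    (hnn : h ⟨n - 1, by omega⟩ ⟨n - 1, by omega⟩ = 0) :
    (∀ i : Fin n, (i : ℕ) < n - 1 → h i ⟨n - 1, by omega⟩ = 0) ∧
    (∀ i j : Fin n, i ≠ j → h i j = 0) ∧
    {ξ : Fin n → ℝ | h.mulVec ξ = 0} =
      ↑(Submodule.span ℝ {(Pi.single (⟨n - 1, by omega⟩ : Fin n) 1 : Fin n → ℝ)}) := by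
  set N : Fin n := ⟨n - 1, by omega⟩ with hNdef
  have hlt : ∀ i : Fin n, i ≠ N → (i : ℕ) < n - 1 := by
    intro i hi
    have h1 := i.is_lt
    by_contra hc
    exact hi (Fin.ext (by simp [hNdef]; omega))
  have hltne : ∀ i : Fin n, (i : ℕ) < n - 1 → i ≠ N := by
    intro i hi e
    rw [e] at hi
    simp [hNdef] at hi
  -- row equations from a kernel vector
  obtain ⟨v, hv0, hv⟩ := (Matrix.exists_mulVec_eq_zero_iff).2 hdet
  have row : ∀ i : Fin n, ∑ j, h i j * v j = 0 := by
    intro i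
    have := congrFun hv i
    simpa [Matrix.mulVec, dotProduct] using this
  have rowi : ∀ i : Fin n, (i : ℕ) < n - 1 → h i i * v i + h i N * v N = 0 := by
    intro i hi
    have hiN : i ≠ N := hltne i hi
    have hsub : ∑ j ∈ ({i, N} : Finset (Fin n)), h i j * v j = ∑ j, h i j * v j := by
      refine Finset.sum_subset (Finset.subset_univ _) ?_
      intro x _ hx
      simp only [Finset.mem_insert, Finset.mem_singleton, not_or] at hx
      rw [hdiag i x (Ne.symm hx.1) hi (hlt x hx.2), zero_mul]
    rw [Finset.sum_pair hiN] at hsub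
    rw [hsub, row i]
  have key : ∀ i : Fin n, (i : ℕ) < n - 1 → h i N = 0 := by
    by_cases hvN : v N = 0
    · -- then v = 0, contradiction
      exfalso
      apply hv0
      funext i
      by_cases hiN : i = N
      · rw [hiN, hvN]; rfl
      · have hi := hlt i hiN
        have := rowi i hi
        rw [hvN, mul_zero, add_zero] at this
        have := mul_eq_zero.1 this
        rcases this with h1 | h1
        · exact absurd h1 (ne_of_gt (hpos i hi))
        · exact h1
    · intro i hi
      -- each term of the last row sum (times v N) is nonpositive and sums to 0
      have hterm : ∀ j : Fin n, (j : ℕ) < n - 1 →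
          v N * (h N j * v j) = -((h j N * v N)^2 / h j j) := by
        intro j hj
        have hjj := (hpos j hj).ne'
        have := rowi j hj
        have hvj : v j = -(h j N * v N) / h j j := by
          rw [eq_div_iff hjj]
          linear_combination this
        rw [hvj, hsymm N j]
        field_simp
      have hsum : ∑ j, v N * (h N j * v j) = 0 := by
        rw [← Finset.mul_sum, row N, mul_zero]
      have hnonpos : ∀ j : Fin n, j ∈ Finset.univ → v N * (h N j * v j) ≤ 0 := by
        intro j _
        by_cases hjN : j = N
        · rw [hjN, hnn]; simp
        · rw [hterm j (hlt j hjN)]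
          have : 0 ≤ (h j N * v N)^2 / h j j := div_nonneg (sq_nonneg _) (hpos j (hlt j hjN)).le
          linarith
      have hz : v N * (h N i * v i) = 0 := by
        have := (Finset.sum_eq_zero_iff_of_nonpos hnonpos).1 hsum i (Finset.mem_univ i)
        exact this
      rw [hterm i hi] at hz
      have hii := (hpos i hi).ne'
      have h2 : (h i N * v N)^2 = 0 := by
        have hz' : (h i N * v N)^2 / h i i = 0 := by linarith
        rcases div_eq_zero_iff.1 hz' with h4 | h4
        · exact h4
        · exact absurd h4 hii
      rcases mul_eq_zero.1 (sq_eq_zero_iff.1 h2) with h3 | h3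
      · exact h3
      · exact absurd h3 hvN
  have offdiag : ∀ i j : Fin n, i ≠ j → h i j = 0 := by
    intro i j hij
    by_cases hjN : j = N
    · subst hjN
      exact key i (hlt i hij)
    · by_cases hiN : i = N
      · subst hiN
        rw [hsymm]
        exact key j (hlt j (Ne.symm hij))
      · exact hdiag i j hij (hlt i hiN) (hlt j hjN)
  refine ⟨key, offdiag, ?_⟩
  -- sums reduce to diagonal
  have hsum_diag : ∀ (ξ : Fin n → ℝ) (i : Fin n), ∑ j, h i j * ξ j = h i i * ξ i := by
    intro ξ i
    refine Finset.sum_eq_single_of_mem i (Finset.mem_univ i) ?_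
    intro j _ hji
    rw [offdiag i j (Ne.symm hji), zero_mul]
  ext ξ
  simp only [Set.mem_setOf_eq, SetLike.mem_coe, Submodule.mem_span_singleton]
  constructor
  · intro hξ
    refine ⟨ξ N, ?_⟩
    funext i
    by_cases hiN : i = N
    · subst hiN
      simp [Pi.single_apply]
    · have hi := hlt i hiN
      have := congrFun hξ i
      simp only [Matrix.mulVec, dotProduct, Pi.zero_apply] at this
      rw [hsum_diag ξ i] at this
      have hz : ξ i = 0 := by
        rcases mul_eq_zero.1 this with h1 | h1
        · exact absurd h1 (ne_of_gt (hpos i hi))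
        · exact h1
      simp [Pi.single_apply, hiN, hz]
  · rintro ⟨a, rfl⟩
    funext i
    simp only [Matrix.mulVec, dotProduct, Pi.zero_apply]
    rw [hsum_diag]
    by_cases hiN : i = N
    · subst hiN
      rw [hnn]
      simp
    · simp [Pi.single_apply, hiN]
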